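/- Let G : ℝᵏ → ℝⁿ, let ρ* > 0, and let z₀ ∈ ℝᵏ. Suppose that for every r ∈ ℝᵏ, every nonzero c ∈ ℝᵏ, and every subset K ⊆ {1,…,n} with |K| ≤ ρ*·n, we have ‖(G(r+c) − G(r))_K‖₁ < ‖(G(r+c) − G(r))_{Kᶜ}‖₁. Then for every error vector e ∈ ℝⁿ with ‖e‖₀ ≤ ρ*·n, z₀ is the unique minimizer of ‖G(z) − (G(z₀) + e)‖₁ over z ∈ ℝᵏ. -/
import Mathlib


/-- ℓ₁ recovery sufficiency: if for every `r`, every nonzero `c` and every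
index set `K` with `|K| ≤ ρ* n` the ℓ₁ mass of `G(r+c) − G(r)` on `K` is less
than that on `Kᶜ`, then for every outlier `e` with `‖e‖₀ ≤ ρ* n`, `z₀` is the
unique minimizer of `‖G(z) − (G(z₀) + e)‖₁`. -/
theorem l1_recovery_sufficient {k n : ℕ} (G : (Fin k → ℝ) → (Fin n → ℝ))
    (ρ : ℝ) (hρ : 0 < ρ) (z₀ : Fin k → ℝ)
    (hcond : ∀ r c : Fin k → ℝ, c ≠ 0 → ∀ K : Finset (Fin n),
      (K.card : ℝ) ≤ ρ * n →
        ∑ i ∈ K, |G (r + c) i - G r i| < ∑ i ∈ Kᶜ, |G (r + c) i - G r i|) :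
    ∀ e : Fin n → ℝ,
      (((Finset.univ.filter fun i => e i ≠ 0).card : ℝ) ≤ ρ * n) →
      ∀ z : Fin k → ℝ, z ≠ z₀ →
        ∑ i, |G z₀ i - (G z₀ i + e i)| < ∑ i, |G z i - (G z₀ i + e i)| := by
  intro e he z hz
  set K := Finset.univ.filter fun i => e i ≠ 0 with hK
  have hc : z - z₀ ≠ 0 := sub_ne_zero.mpr hz
  have hcond' := hcond z₀ (z - z₀) hc K he
  rw [add_sub_cancel] at hcond'
  have hLHS : ∑ i, |G z₀ i - (G z₀ i + e i)| = ∑ i ∈ K, |e i| := by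
    have : ∀ i, |G z₀ i - (G z₀ i + e i)| = |e i| := by
      intro i; rw [show G z₀ i - (G z₀ i + e i) = -e i by ring, abs_neg]
    rw [Finset.sum_congr rfl fun i _ => this i]
    refine (Finset.sum_subset (Finset.subset_univ K) ?_).symm
    intro i _ hi
    simp only [hK, Finset.mem_filter, Finset.mem_univ, true_and, not_not] at hi
    simp [hi]
  have hRHS : ∑ i, |G z i - (G z₀ i + e i)|
      = ∑ i ∈ K, |G z i - (G z₀ i + e i)| + ∑ i ∈ Kᶜ, |G z i - G z₀ i| := by
    rw [← Finset.sum_add_sum_compl K fun i => |G z i - (G z₀ i + e i)|]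
    congr 1
    refine Finset.sum_congr rfl fun i hi => ?_
    have : e i = 0 := by
      simp only [hK, Finset.mem_compl, Finset.mem_filter, Finset.mem_univ,
        true_and, not_not] at hi
      exact hi
    rw [this]; ring_nf
  have hbound : ∑ i ∈ K, (|e i| - |G z i - G z₀ i|)
      ≤ ∑ i ∈ K, |G z i - (G z₀ i + e i)| := by
    refine Finset.sum_le_sum fun i _ => ?_
    have := abs_sub_abs_le_abs_sub (e i) (G z i - G z₀ i)
    calc |e i| - |G z i - G z₀ i| ≤ |e i - (G z i - G z₀ i)| := this
      _ = |G z i - (G z₀ i + e i)| := by rw [← abs_neg]; ring_nf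
  rw [hLHS, hRHS, Finset.sum_sub_distrib] at *
  linarith
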